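/- The graphs C_{c,ℓ} (closure of the complete ℓ-ary tree of height c) contain no path on n vertices as a subgraph for any n ≥ 2^{c+1}. Equivalently, the longest path in C_{c,ℓ} has fewer than 2^{c+1} vertices. -/

import Mathlib

open SimpleGraph

universe u

/-- The graph obtained from `ℓ` vertex-disjoint copies of `G` by adding one dominant
vertex (`none`) adjacent to all other vertices. -/
def addDomCopies {V : Type u} (G : SimpleGraph V) (ℓ : ℕ) :
    SimpleGraph (Option (Fin ℓ × V)) where
  Adj x y :=
    match x, y with
    | none, none => False
    | none, some _ => True
    | some _, none => True
    | some p, some q => p.1 = q.1 ∧ G.Adj p.2 q.2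
  symm := by
    refine ⟨?_⟩
    rintro (_ | p) (_ | q) h
    · exact h
    · trivial
    · trivial
    · exact ⟨h.1.symm, h.2.symm⟩
  loopless := by
    refine ⟨?_⟩
    rintro (_ | p) h
    · exact h
    · exact G.irrefl h.2

/-- Vertex type of the graph `C_{c,ℓ}`. -/
def CV (ℓ : ℕ) : ℕ → Type
  | 0 => Fin 1
  | c + 1 => Option (Fin ℓ × CV ℓ c)

/-- The graphs `C_{c,ℓ}`: `C_{0,ℓ}` is a single vertex, `C_{1,ℓ} = K_{1,ℓ}`, and
`C_{c,ℓ}` is obtained from `ℓ` disjoint copies of `C_{c−1,ℓ}` by adding one dominant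
vertex; equivalently the closure of the complete `ℓ`-ary tree of height `c`. -/
def Cfam (ℓ : ℕ) : (c : ℕ) → SimpleGraph (CV ℓ c)
  | 0 => ⊥
  | c + 1 => addDomCopies (Cfam ℓ c) ℓ

lemma projWalk {V : Type u} (G : SimpleGraph V) (ℓ : ℕ) :
    ∀ {s vv : Option (Fin ℓ × V)} (p : (addDomCopies G ℓ).Walk s vv) (i : Fin ℓ) (a : V),
      s = some (i, a) → none ∉ p.support →
      ∃ (b : V) (q : G.Walk a b), vv = some (i, b) ∧
        p.support = q.support.map (fun x => some (i, x)) := by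
  intro s vv p
  induction p with
  | nil =>
    intro i a hs _
    subst hs
    exact ⟨a, Walk.nil, rfl, by simp⟩
  | @cons s w vv h p ih =>
    intro i a hs hnone
    subst hs
    rw [Walk.support_cons] at hnone
    have hnone' : none ∉ p.support := fun hmem => hnone (List.mem_cons_of_mem _ hmem)
    cases w with
    | none => exact absurd (List.mem_cons_of_mem _ p.start_mem_support) hnone
    | some w =>
      obtain ⟨j, b'⟩ := w
      have h1 : i = j := h.1
      have h2 : G.Adj a b' := h.2
      subst h1
      obtain ⟨b, q, hvv, hsup⟩ := ih i b' rfl hnone'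
      exact ⟨b, Walk.cons h2 q, hvv, by simp [Walk.support_cons, hsup]⟩

lemma noneFreeBound {V : Type u} (G : SimpleGraph V) (ℓ m : ℕ)
    (hG : ∀ (a b : V) (q : G.Walk a b), q.IsPath → q.support.length < m)
    {u v : Option (Fin ℓ × V)} (p : (addDomCopies G ℓ).Walk u v) (hp : p.IsPath)
    (hnone : none ∉ p.support) : p.support.length < m := by
  cases u with
  | none => exact absurd p.start_mem_support hnone
  | some u =>
    obtain ⟨i, a⟩ := u
    obtain ⟨b, q, hvv, hsup⟩ := projWalk G ℓ p i a rfl hnone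
    have hq : q.IsPath := by
      rw [Walk.isPath_def]
      have := hp.support_nodup
      rw [hsup] at this
      exact this.of_map _
    have := hG a b q hq
    rw [hsup, List.length_map]
    exact this

lemma fromNoneBound {V : Type u} (G : SimpleGraph V) (ℓ m : ℕ)
    (hG : ∀ (a b : V) (q : G.Walk a b), q.IsPath → q.support.length < m)
    (hm : 1 ≤ m)
    {v : Option (Fin ℓ × V)} (p : (addDomCopies G ℓ).Walk none v) (hp : p.IsPath) :
    p.support.length ≤ m := by
  cases p with
  | nil => simpa using hm
  | cons h p =>
    have hp' : p.IsPath := hp.of_cons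
    have hnone : none ∉ p.support := by
      have := hp.support_nodup
      rw [Walk.support_cons, List.nodup_cons] at this
      exact this.1
    have := noneFreeBound G ℓ m hG p hp' hnone
    rw [Walk.support_cons, List.length_cons]
    omega

lemma stepBound {V : Type u} (G : SimpleGraph V) (ℓ m : ℕ)
    (hG : ∀ (a b : V) (q : G.Walk a b), q.IsPath → q.support.length < m)
    (hm : 1 ≤ m)
    {u v : Option (Fin ℓ × V)} (p : (addDomCopies G ℓ).Walk u v) (hp : p.IsPath) :
    p.support.length < 2 * m := by
  haveI := Classical.decEq (Option (Fin ℓ × V))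
  by_cases hnone : none ∈ p.support
  · have hspec := p.take_spec hnone
    set q := p.takeUntil none hnone with hq
    set r := p.dropUntil none hnone with hr
    have hqp : q.IsPath := hp.takeUntil hnone
    have hrp : r.IsPath := hp.dropUntil hnone
    have hqb : q.support.length ≤ m := by
      have := fromNoneBound G ℓ m hG hm q.reverse hqp.reverse
      simpa using this
    have hrb : r.support.length ≤ m := fromNoneBound G ℓ m hG hm r hrp
    have hplen : p.support.length = q.support.length + r.support.length - 1 := by
      conv_lhs => rw [← hspec]
      rw [Walk.support_append, List.length_append]
      have : r.support.length = r.support.tail.length + 1 := by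
        cases r <;> simp [Walk.support_cons]
      omega
    have hq1 : 1 ≤ q.support.length := by
      have := q.start_mem_support
      cases hh : q.support with
      | nil => rw [hh] at this; simp at this
      | cons x l => simp [hh]
    omega
  · exact (noneFreeBound G ℓ m hG p hp hnone).trans_le (by omega)

/-- `C_{c,ℓ}` contains no path on `n` vertices for `n ≥ 2^(c+1)`; equivalently, every
path in `C_{c,ℓ}` has fewer than `2^(c+1)` vertices. -/
theorem stmt_10 (c ℓ : ℕ) (u v : CV ℓ c) (p : (Cfam ℓ c).Walk u v) (hp : p.IsPath) :
    p.support.length < 2 ^ (c + 1) := by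
  induction c with
  | zero =>
    cases p with
    | nil => simp
    | cons h p => exact absurd h (by simp [Cfam] at *)
  | succ c ih =>
    have : p.support.length < 2 * 2 ^ (c + 1) :=
      stepBound (Cfam ℓ c) ℓ (2 ^ (c + 1)) (fun a b q hq => ih a b q hq)
        (Nat.one_le_two_pow) p hp
    calc p.support.length < 2 * 2 ^ (c + 1) := this
      _ = 2 ^ (c + 1 + 1) := by ring
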